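/- The function F(y) = ((1+y²)/y)·[θ·arctan(y) − μπ/2], where θ = c₁+c₂+c₃ and μ = c₂+c₃ with c₁,c₂,c₃ > 0, is strictly increasing on (0, ∞), tends to −∞ as y → 0⁺, and tends to +∞ as y → +∞; hence for every λ ∈ ℝ there is a unique y > 0 with F(y) = λ. -/

import Mathlib

open Real Set Filter Topology

private lemma arctan_lt_self' {x : ℝ} (hx : 0 < x) : arctan x < x := by
  have h0 : (0:ℝ) < arctan x := by
    have := Real.arctan_strictMono hx
    simpa [Real.arctan_zero] using this
  have h := Real.lt_tan h0 (Real.arctan_lt_pi_div_two x)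
  rwa [Real.tan_arctan] at h

private lemma key_pos {θ μ : ℝ} (hθμ : μ < θ) (hμ : 0 < μ) {y : ℝ} (hy : 0 < y) :
    0 < (y ^ 2 - 1) * (θ * arctan y - μ * π / 2) + θ * y := by
  have hθ : 0 < θ := hμ.trans hθμ
  have hay : arctan y < y := arctan_lt_self' hy
  have ha0 : 0 < arctan y := by
    have := Real.arctan_strictMono hy
    simpa [Real.arctan_zero] using this
  rcases le_or_gt y 1 with h1 | h1
  · -- y ≤ 1 : y^2 - 1 ≤ 0
    have hsq : y ^ 2 - 1 ≤ 0 := by nlinarith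
    rcases le_or_gt (θ * arctan y - μ * π / 2) 0 with hA | hA
    · nlinarith [mul_nonneg (neg_nonneg.2 hsq) (neg_nonneg.2 hA)]
    · have hAy : θ * arctan y - μ * π / 2 < θ * y := by
        nlinarith [Real.pi_pos]
      nlinarith [mul_nonneg (neg_nonneg.2 hsq) hA.le]
  · -- 1 < y
    have hsq : 0 < y ^ 2 - 1 := by nlinarith
    rcases le_or_gt 0 (θ * arctan y - μ * π / 2) with hA | hA
    · nlinarith [mul_nonneg hsq.le hA]
    · have hinv : 0 < y⁻¹ := inv_pos.2 hy
      have harcinv : arctan y⁻¹ < y⁻¹ := arctan_lt_self' hinv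
      have harc : Real.arctan y⁻¹ = π / 2 - arctan y := Real.arctan_inv_of_pos hy
      have hbound : μ * π / 2 - θ * arctan y < θ * y⁻¹ := by
        have h2 : μ * π / 2 - θ * arctan y < θ * (π / 2 - arctan y) := by
          nlinarith [Real.pi_pos]
        have h3 : θ * (π / 2 - arctan y) < θ * y⁻¹ := by
          rw [← harc]; exact (mul_lt_mul_iff_right₀ hθ).2 harcinv
        linarith
      have e1 : (y ^ 2 - 1) * (θ * y⁻¹) = θ * y - θ * y⁻¹ := by
        field_simp
      have e2 := mul_lt_mul_of_pos_left hbound hsq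
      nlinarith [e1, e2, mul_pos hθ hinv]

theorem stmt_12 (c₁ c₂ c₃ : ℝ) (h₁ : 0 < c₁) (h₂ : 0 < c₂) (h₃ : 0 < c₃)
    (F : ℝ → ℝ)
    (hF : ∀ y, F y = ((1 + y ^ 2) / y) * ((c₁ + c₂ + c₃) * arctan y - (c₂ + c₃) * π / 2)) :
    StrictMonoOn F (Ioi 0) ∧
    Tendsto F (nhdsWithin 0 (Ioi 0)) atBot ∧
    Tendsto F atTop atTop ∧
    ∀ lam : ℝ, ∃! y : ℝ, 0 < y ∧ F y = lam := by
  have hFe : F = fun y => ((1 + y ^ 2) / y) * ((c₁ + c₂ + c₃) * arctan y - (c₂ + c₃) * π / 2) :=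
    funext hF
  subst hFe
  set θ := c₁ + c₂ + c₃ with hθdef
  set μ := c₂ + c₃ with hμdef
  have hθμ : μ < θ := by rw [hθdef, hμdef]; linarith
  have hμ : 0 < μ := by rw [hμdef]; linarith
  have hθ : 0 < θ := hμ.trans hθμ
  -- derivative
  have hder : ∀ y : ℝ, 0 < y →
      HasDerivAt (fun y => ((1 + y ^ 2) / y) * (θ * arctan y - μ * π / 2))
        (((y ^ 2 - 1) * (θ * arctan y - μ * π / 2) + θ * y) / y ^ 2) y := by
    intro y hy
    have ha : HasDerivAt (fun x : ℝ => 1 + x ^ 2) (2 * y) y := by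
      simpa using (hasDerivAt_pow 2 y).const_add 1
    have hb : HasDerivAt (fun x : ℝ => x) 1 y := hasDerivAt_id y
    have h1 := ha.div hb hy.ne'
    have h2 : HasDerivAt (fun x : ℝ => θ * arctan x - μ * π / 2) (θ * (1 / (1 + y ^ 2))) y :=
      ((Real.hasDerivAt_arctan y).const_mul θ).sub_const _
    have h3 := h1.mul h2
    refine h3.congr_deriv ?_
    simp only [Pi.div_apply]
    have h1y : (1:ℝ) + y ^ 2 ≠ 0 := by positivity
    field_simp
    ring
  have hcont : ContinuousOn (fun y : ℝ => ((1 + y ^ 2) / y) * (θ * arctan y - μ * π / 2))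
      (Ioi 0) := fun x hx => ((hder x hx).continuousAt).continuousWithinAt
  have hmono : StrictMonoOn (fun y : ℝ => ((1 + y ^ 2) / y) * (θ * arctan y - μ * π / 2))
      (Ioi 0) := by
    apply strictMonoOn_of_deriv_pos (convex_Ioi 0) hcont
    intro x hx
    rw [interior_Ioi] at hx
    rw [(hder x hx).deriv]
    exact div_pos (key_pos hθμ hμ hx) (pow_pos hx 2)
  have hbot : Tendsto (fun y : ℝ => ((1 + y ^ 2) / y) * (θ * arctan y - μ * π / 2))
      (𝓝[>] 0) atBot := by
    have h1 : Tendsto (fun y : ℝ => 1 + y ^ 2) (𝓝[>] (0:ℝ)) (𝓝 1) := by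
      have hc : Continuous (fun y : ℝ => 1 + y ^ 2) := by continuity
      have := (hc.tendsto 0).mono_left (nhdsWithin_le_nhds (s := Ioi (0:ℝ)))
      simpa using this
    have h2 : Tendsto (fun y : ℝ => (1 + y ^ 2) / y) (𝓝[>] (0:ℝ)) atTop := by
      simpa [div_eq_mul_inv] using h1.pos_mul_atTop one_pos tendsto_inv_nhdsGT_zero
    have h3 : Tendsto (fun y : ℝ => θ * arctan y - μ * π / 2) (𝓝[>] (0:ℝ))
        (𝓝 (-(μ * π / 2))) := by
      have hc : Continuous (fun y : ℝ => θ * arctan y - μ * π / 2) :=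
        (continuous_const.mul Real.continuous_arctan).sub continuous_const
      have := (hc.tendsto 0).mono_left (nhdsWithin_le_nhds (s := Ioi (0:ℝ)))
      simpa using this
    exact h2.atTop_mul_neg (by nlinarith [Real.pi_pos]) h3
  have htop : Tendsto (fun y : ℝ => ((1 + y ^ 2) / y) * (θ * arctan y - μ * π / 2))
      atTop atTop := by
    have h1 : Tendsto (fun y : ℝ => (1 + y ^ 2) / y) atTop atTop := by
      apply tendsto_atTop_mono' atTop _ tendsto_id
      filter_upwards [eventually_gt_atTop (0:ℝ)] with y hy
      rw [le_div_iff₀ hy]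
      simp only [id_eq]
      nlinarith
    have h2 : Tendsto (fun y : ℝ => θ * arctan y - μ * π / 2) atTop
        (𝓝 (θ * (π / 2) - μ * π / 2)) := by
      exact (((Real.tendsto_arctan_atTop.mono_right nhdsWithin_le_nhds).const_mul
        θ).sub_const _)
    exact h1.atTop_mul_pos (by nlinarith [Real.pi_pos]) h2
  refine ⟨hmono, hbot, htop, fun lam => ?_⟩
  obtain ⟨a, hFa, ha0⟩ :=
    ((hbot.eventually (eventually_lt_atBot lam)).and eventually_mem_nhdsWithin).exists
  obtain ⟨b, hFb, hab⟩ :=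
    ((htop.eventually (eventually_gt_atTop lam)).and (eventually_gt_atTop a)).exists
  have ha0' : (0:ℝ) < a := ha0
  have hsub : Icc a b ⊆ Ioi 0 := fun x hx => lt_of_lt_of_le ha0' hx.1
  have hiv := intermediate_value_Icc hab.le (hcont.mono hsub)
  obtain ⟨y, hy, hFy⟩ := hiv ⟨hFa.le, hFb.le⟩
  have hy0 : 0 < y := hsub hy
  refine ⟨y, ⟨hy0, hFy⟩, fun z hz => ?_⟩
  exact hmono.injOn (mem_Ioi.2 hz.1) (mem_Ioi.2 hy0) (hz.2.trans hFy.symm)
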